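/- With f_{ab;I}(x) := the unique function on the simplex satisfying df_{ab;I} = Σ_j (s_a^j − s_b^j + i_j) dx_j and f_{ab;I}(v_{ab;I}) = 0, where s_a^j = (a/2)x^j in dual coordinates, the normalized basis elements e_{ab;I} = e^{f_{ab;I}} e^{iI·y̌} satisfy the product rule e_{ab;I} · e_{bc;K} = e^{f_{ab;I}(v_{ac;I+K}) + f_{bc;K}(v_{ac;I+K})} · e_{ac;I+K} for all a < b < c. -/

import Mathlib

/- STATEMENT 13: For the normalized basis elements
`e_{ab;I} = e^{f_{ab;I}} e^{iI·y̌}` (with `e^{f_{ab;I}}` the normalized amplitude,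
maximum 1 on the simplex, and `f_{ab;I}(v_{ab;I}) = 0`), the product rule
`e_{ab;I} · e_{bc;K} = e^{f_{ab;I}(v_{ac;I+K}) + f_{bc;K}(v_{ac;I+K})} · e_{ac;I+K}`
holds for all a < b < c. -/

/-- The unnormalized amplitude `E_{d;I}(x) = ((2−Σx)/2)^{(d−|I|)/2} ∏ (x_k/2)^{i_k/2}`. -/
noncomputable def Efun (n : ℕ) (d : ℝ) (I : Fin n → ℕ) (x : Fin n → ℝ) : ℝ :=
  ((2 - ∑ k, x k) / 2) ^ ((d - ∑ k, (I k : ℝ)) / 2)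
    * ∏ k, (x k / 2) ^ ((I k : ℝ) / 2)

/-- The maximizer `v_{d;I} = 2I/d`. -/
noncomputable def vpt (n : ℕ) (d : ℝ) (I : Fin n → ℕ) : Fin n → ℝ :=
  fun k => 2 * (I k : ℝ) / d

/-- The normalized amplitude `e^{f_{ab;I}}` with maximum 1 attained at `v_{d;I}`. -/
noncomputable def Ehat (n : ℕ) (d : ℝ) (I : Fin n → ℕ) (x : Fin n → ℝ) : ℝ :=
  Efun n d I x / Efun n d I (vpt n d I)

/-- The normalized basis element `e_{ab;I}(x,y) = Ehat(x) · e^{i Σ i_k y_k}`. -/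
noncomputable def ebase (n : ℕ) (d : ℝ) (I : Fin n → ℕ) (x y : Fin n → ℝ) : ℂ :=
  (Ehat n d I x : ℂ) * Complex.exp (Complex.I * ∑ k, (I k : ℝ) * y k)

lemma rpadd {x p q : ℝ} (hx : 0 ≤ x) (hp : 0 ≤ p) (hq : 0 ≤ q) :
    x ^ p * x ^ q = x ^ (p + q) := (Real.rpow_add_of_nonneg hx hp hq).symm

lemma Efun_mul (n : ℕ) (d1 d2 : ℝ) (I K : Fin n → ℕ) (x : Fin n → ℝ)
    (hx : ∀ k, 0 ≤ x k) (hs : ∑ k, x k ≤ 2)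
    (h1 : (∑ k, (I k : ℝ)) ≤ d1) (h2 : (∑ k, (K k : ℝ)) ≤ d2) :
    Efun n d1 I x * Efun n d2 K x = Efun n (d1 + d2) (I + K) x := by
  unfold Efun
  have hA : (0:ℝ) ≤ (2 - ∑ k, x k) / 2 := by linarith
  rw [mul_mul_mul_comm, rpadd hA (by linarith) (by linarith), ← Finset.prod_mul_distrib]
  congr 1
  · congr 1
    simp only [Pi.add_apply]
    push_cast
    rw [Finset.sum_add_distrib]
    ring
  · apply Finset.prod_congr rfl
    intro k _
    rw [rpadd (by have := hx k; positivity) (by positivity) (by positivity)]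
    congr 1
    simp only [Pi.add_apply]
    push_cast
    ring

lemma Efun_pos (n : ℕ) (d d' : ℝ) (I J : Fin n → ℕ)
    (hd' : 0 < d') (hIJ : ∀ k, I k ≤ J k)
    (_hJ : (∑ k, (J k : ℝ)) ≤ d') (hId : (∑ k, (I k : ℝ)) ≤ d)
    (himp : (∑ k, (I k : ℝ)) < d → (∑ k, (J k : ℝ)) < d') :
    0 < Efun n d I (vpt n d' J) := by
  unfold Efun vpt
  apply mul_pos
  · rcases lt_or_eq_of_le hId with h | h
    · apply Real.rpow_pos_of_pos
      have hJ' := himp h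
      have hsum : ∑ k, 2 * (J k : ℝ) / d' = 2 * (∑ k, (J k : ℝ)) / d' := by
        rw [Finset.mul_sum, Finset.sum_div]
      rw [hsum]
      have : 2 * (∑ k, (J k : ℝ)) / d' < 2 := by
        rw [div_lt_iff₀ hd']
        nlinarith
      linarith
    · rw [← h]
      simp
  · apply Finset.prod_pos
    intro k _
    rcases Nat.eq_zero_or_pos (I k) with h | h
    · simp [h]
    · apply Real.rpow_pos_of_pos
      have hJk : (0:ℝ) < (J k : ℝ) := by
        exact_mod_cast lt_of_lt_of_le h (hIJ k)
      positivity

theorem stmt_13 (n : ℕ) (a b c : ℤ) (hab : a < b) (hbc : b < c)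
    (I K : Fin n → ℕ) (hI : (∑ k, (I k : ℤ)) ≤ b - a)
    (hK : (∑ k, (K k : ℤ)) ≤ c - b) :
    ∀ x : Fin n → ℝ, (∀ k, 0 ≤ x k) → (∑ k, x k) ≤ 2 → ∀ y : Fin n → ℝ,
      ebase n ((b : ℝ) - a) I x y * ebase n ((c : ℝ) - b) K x y
        = Real.exp
            (Real.log (Ehat n ((b : ℝ) - a) I (vpt n ((c : ℝ) - a) (I + K)))
              + Real.log (Ehat n ((c : ℝ) - b) K (vpt n ((c : ℝ) - a) (I + K))))
          * ebase n ((c : ℝ) - a) (I + K) x y := by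
  intro x hx hs y
  have hd1 : (0:ℝ) < (b:ℝ) - a := by
    have : (a:ℝ) < b := by exact_mod_cast hab
    linarith
  have hd2 : (0:ℝ) < (c:ℝ) - b := by
    have : (b:ℝ) < c := by exact_mod_cast hbc
    linarith
  have hdc : (0:ℝ) < (c:ℝ) - a := by linarith
  have hI' : (∑ k, (I k : ℝ)) ≤ (b:ℝ) - a := by exact_mod_cast hI
  have hK' : (∑ k, (K k : ℝ)) ≤ (c:ℝ) - b := by exact_mod_cast hK
  have hIK : (∑ k, ((I + K) k : ℝ)) ≤ (c:ℝ) - a := by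
    simp only [Pi.add_apply]
    push_cast
    rw [Finset.sum_add_distrib]
    linarith
  set v := vpt n ((c:ℝ) - a) (I + K) with hv
  have hvnn : ∀ k, 0 ≤ v k := by
    intro k
    simp only [hv, vpt]
    positivity
  have hvs : ∑ k, v k ≤ 2 := by
    have : ∑ k, v k = 2 * (∑ k, ((I + K) k : ℝ)) / ((c:ℝ) - a) := by
      simp only [hv, vpt]
      rw [Finset.mul_sum, Finset.sum_div]
    rw [this, div_le_iff₀ hdc]
    nlinarith
  -- positivity of all the Efun values involved
  have P1 : 0 < Efun n ((b:ℝ) - a) I (vpt n ((b:ℝ) - a) I) :=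
    Efun_pos n _ _ I I hd1 (fun k => le_rfl) hI' hI' (fun h => h)
  have P2 : 0 < Efun n ((c:ℝ) - b) K (vpt n ((c:ℝ) - b) K) :=
    Efun_pos n _ _ K K hd2 (fun k => le_rfl) hK' hK' (fun h => h)
  have Pc : 0 < Efun n ((c:ℝ) - a) (I + K) v :=
    Efun_pos n _ _ (I + K) (I + K) hdc (fun k => le_rfl) hIK hIK (fun h => h)
  have hsumIK : (∑ k, ((I + K) k : ℝ)) = (∑ k, (I k : ℝ)) + ∑ k, (K k : ℝ) := by
    simp only [Pi.add_apply]
    push_cast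
    rw [Finset.sum_add_distrib]
  have Q1 : 0 < Efun n ((b:ℝ) - a) I v :=
    Efun_pos n _ _ I (I + K) hdc (fun k => Nat.le_add_right _ _) hIK hI'
      (fun h => by rw [hsumIK]; linarith)
  have Q2 : 0 < Efun n ((c:ℝ) - b) K v :=
    Efun_pos n _ _ K (I + K) hdc (fun k => Nat.le_add_left _ _) hIK hK'
      (fun h => by rw [hsumIK]; linarith)
  have hE1 : 0 < Ehat n ((b:ℝ) - a) I v := div_pos Q1 P1
  have hE2 : 0 < Ehat n ((c:ℝ) - b) K v := div_pos Q2 P2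
  rw [Real.exp_add, Real.exp_log hE1, Real.exp_log hE2]
  -- key real identity
  have hdd : ((b:ℝ) - a) + ((c:ℝ) - b) = (c:ℝ) - a := by ring
  have key : Ehat n ((b:ℝ) - a) I x * Ehat n ((c:ℝ) - b) K x
      = (Ehat n ((b:ℝ) - a) I v * Ehat n ((c:ℝ) - b) K v)
        * Ehat n ((c:ℝ) - a) (I + K) x := by
    unfold Ehat
    rw [div_mul_div_comm, Efun_mul n _ _ I K x hx hs hI' hK', hdd,
      div_mul_div_comm, Efun_mul n _ _ I K v hvnn hvs hI' hK', hdd]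
    rw [div_mul_div_comm]
    rw [← hv]
    field_simp
  -- complex phase identity
  have phase : Complex.exp (Complex.I * ∑ k, (I k : ℝ) * y k)
      * Complex.exp (Complex.I * ∑ k, (K k : ℝ) * y k)
      = Complex.exp (Complex.I * ∑ k, (((I + K) k : ℕ) : ℝ) * y k) := by
    rw [← Complex.exp_add]
    congr 1
    rw [← mul_add]
    congr 1
    have h : (∑ k, (I k : ℝ) * y k) + (∑ k, (K k : ℝ) * y k)
        = ∑ k, (((I + K) k : ℕ) : ℝ) * y k := by
      rw [← Finset.sum_add_distrib]
      apply Finset.sum_congr rfl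
      intro k _
      simp only [Pi.add_apply]
      push_cast
      ring
    exact_mod_cast h
  unfold ebase
  rw [mul_mul_mul_comm, phase, ← Complex.ofReal_mul, key]
  push_cast
  ring
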